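/- Let G be a modular graph with at least three vertices. Then Σ_{S ⊆ V(G), |S|=3} d(S)² = ((|V(G)|−2)/4)·\overline{WW}(G) + (1/4)·\widehat{WW}(G). -/

import Mathlib

open Finset SimpleGraph Polynomial

/-- The Steiner distance of a vertex set `S`: the minimum number of edges of a
connected subgraph of `G` whose vertex set contains `S`. -/
noncomputable def steinerDist {V : Type*} (G : SimpleGraph V) (S : Set V) : ℕ :=
  sInf {n | ∃ H : G.Subgraph, H.Connected ∧ S ⊆ H.verts ∧ H.edgeSet.ncard = n}

/-- The Steiner `k`-Wiener index. -/
noncomputable def SW {V : Type*} [Fintype V] [DecidableEq V] (k : ℕ) (G : SimpleGraph V) : ℕ :=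
  ∑ S ∈ Finset.powersetCard k (Finset.univ : Finset V), steinerDist G (S : Set V)

/-- The Steiner `k`-hyper-Wiener index. -/
noncomputable def SWW {V : Type*} [Fintype V] [DecidableEq V] (k : ℕ) (G : SimpleGraph V) : ℝ :=
  (1/2) * ∑ S ∈ Finset.powersetCard k (Finset.univ : Finset V), (steinerDist G (S : Set V) : ℝ)
    + (1/2) * ∑ S ∈ Finset.powersetCard k (Finset.univ : Finset V), (steinerDist G (S : Set V) : ℝ) ^ 2

/-- The Steiner `k`-Hosoya polynomial `∑_{m ≥ 0} d_k(G,m) x^m`, written as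
`∑_{S ⊆ V(G), |S| = k} x^{d(S)}`. -/
noncomputable def SH {V : Type*} [Fintype V] [DecidableEq V] (k : ℕ) (G : SimpleGraph V) :
    Polynomial ℝ :=
  ∑ S ∈ Finset.powersetCard k (Finset.univ : Finset V), Polynomial.X ^ (steinerDist G (S : Set V))

/-- The Wiener index `W(G) = ∑_{{u,v} ⊆ V(G)} d(u,v)` (each unordered pair counted once). -/
noncomputable def wiener {V : Type*} [Fintype V] [DecidableEq V] (G : SimpleGraph V) : ℝ :=
  (∑ p ∈ Finset.univ.offDiag, (G.dist p.1 p.2 : ℝ)) / 2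

/-- `\overline{WW}(G) = ∑_{{u,v} ⊆ V(G)} d(u,v)²`. -/
noncomputable def WWbar {V : Type*} [Fintype V] [DecidableEq V] (G : SimpleGraph V) : ℝ :=
  (∑ p ∈ Finset.univ.offDiag, (G.dist p.1 p.2 : ℝ) ^ 2) / 2

/-- The set of ordered triples of pairwise distinct vertices. -/
def O3 (V : Type*) [Fintype V] [DecidableEq V] : Finset (V × V × V) :=
  Finset.univ.filter fun t => t.1 ≠ t.2.1 ∧ t.1 ≠ t.2.2 ∧ t.2.1 ≠ t.2.2

/-- `\widehat{WW}(G) = ∑_{(u,v,w) ∈ O₃(G)} d(u,v)·d(u,w)`. -/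
noncomputable def WWhat {V : Type*} [Fintype V] [DecidableEq V] (G : SimpleGraph V) : ℝ :=
  ∑ t ∈ O3 V, (G.dist t.1 t.2.1 : ℝ) * (G.dist t.1 t.2.2 : ℝ)

/-- `z` is a median of the triple `u, v, w`: it lies on a shortest `u,v`-path, a shortest
`u,w`-path and a shortest `v,w`-path. -/
def IsMedian {V : Type*} (G : SimpleGraph V) (u v w z : V) : Prop :=
  G.dist u z + G.dist z v = G.dist u v ∧
  G.dist u z + G.dist z w = G.dist u w ∧
  G.dist v z + G.dist z w = G.dist v w

/-- A modular graph: a connected graph in which every triple of vertices has a median. -/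
def IsModular {V : Type*} (G : SimpleGraph V) : Prop :=
  G.Connected ∧ ∀ u v w : V, ∃ z : V, IsMedian G u v w z

/-- The hypercube graph `Q_n` on `Fin n → Bool`: two vertices are adjacent iff they differ
in exactly one coordinate. -/
def hypercubeGraph (n : ℕ) : SimpleGraph (Fin n → Bool) :=
  SimpleGraph.fromRel fun x y => ∃! i, x i ≠ y i

/-- A partial cube: a connected graph isometrically embeddable into a hypercube. -/
def IsPartialCube {V : Type*} (G : SimpleGraph V) : Prop :=
  G.Connected ∧ ∃ (n : ℕ) (f : V → (Fin n → Bool)),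
    ∀ u v : V, (hypercubeGraph n).dist (f u) (f v) = G.dist u v

/-- The Djoković–Winkler relation Θ on (edges viewed as) unordered pairs:
`s(u₁,v₁) Θ s(u₂,v₂)` iff `d(u₁,u₂) + d(v₁,v₂) ≠ d(u₁,v₂) + d(v₁,u₂)`. -/
def theta {V : Type*} (G : SimpleGraph V) (e f : Sym2 V) : Prop :=
  ∃ u₁ v₁ u₂ v₂ : V, e = s(u₁, v₁) ∧ f = s(u₂, v₂) ∧
    G.dist u₁ u₂ + G.dist v₁ v₂ ≠ G.dist u₁ v₂ + G.dist v₁ u₂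

/-- `E` together with the component data `U`, `U'` is the family of Θ-classes of the
partial cube `G`: each `E i` is a Θ-class of edges, the classes are pairwise distinct and
cover the edge set, and `U i`, `U' i` are (the vertex sets of) the two connected components
of `G - E i`. -/
def IsThetaClassSetup {V : Type*} (G : SimpleGraph V) (d : ℕ)
    (E : Fin d → Set (Sym2 V)) (U U' : Fin d → Set V) : Prop :=
  (∀ i, ∃ e ∈ G.edgeSet, E i = {f | f ∈ G.edgeSet ∧ theta G f e}) ∧
  Function.Injective E ∧
  G.edgeSet = ⋃ i, E i ∧
  ∀ i, ∃ c c' : (G.deleteEdges (E i)).ConnectedComponent, c ≠ c' ∧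
    U i = c.supp ∧ U' i = c'.supp ∧
    ∀ b : (G.deleteEdges (E i)).ConnectedComponent, b = c ∨ b = c'

/-- Lower bound: any connected subgraph containing `u, v, w` has many edges. -/
lemma sum_dist_le_two_mul_ncard {V : Type*} [Fintype V] {G : SimpleGraph V}
    (hconn : G.Connected) (H : G.Subgraph) (hc : H.Connected) {u v w : V}
    (hu : u ∈ H.verts) (hv : v ∈ H.verts) (hw : w ∈ H.verts) :
    G.dist u v + G.dist u w + G.dist v w ≤ 2 * H.edgeSet.ncard := by
  classical
  set u' : H.verts := ⟨u, hu⟩ with hu'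
  set v' : H.verts := ⟨v, hv⟩ with hv'
  set w' : H.verts := ⟨w, hw⟩ with hw'
  obtain ⟨p0⟩ := hc.coe.preconnected v' w'
  set p := p0.bypass with hpdef
  have hp : p.IsPath := p0.bypass_isPath
  have hpne : p.support.toFinset.Nonempty := ⟨v', by simp [Walk.start_mem_support]⟩
  obtain ⟨x, hxmem, hxmin⟩ :=
    p.support.toFinset.exists_min_image (fun y => H.coe.dist u' y) hpne
  rw [List.mem_toFinset] at hxmem
  obtain ⟨r0, hr0⟩ := Reachable.exists_walk_length_eq_dist (hc.coe.preconnected u' x)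
  set r := r0.bypass with hrdef
  have hr : r.IsPath := r0.bypass_isPath
  have hrlen : r.length = H.coe.dist u' x :=
    le_antisymm (hr0 ▸ r0.length_bypass_le) (dist_le r)
  have key : ∀ y ∈ r.support, y ∈ p.support → y = x := by
    intro y hyr hyp
    by_contra hne
    have h1 : H.coe.dist u' y ≤ (r.takeUntil y hyr).length := dist_le _
    have h2 : (r.takeUntil y hyr).length + (r.dropUntil y hyr).length = r.length := by
      rw [← Walk.length_append, Walk.take_spec]
    have h3 : (r.dropUntil y hyr).length ≠ 0 :=
      fun h => hne (Walk.eq_of_length_eq_zero h)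
    have h4 : H.coe.dist u' y < H.coe.dist u' x := by omega
    exact absurd (hxmin y (List.mem_toFinset.mpr hyp)) (not_le.mpr h4)
  have hdisj : ∀ (a b : H.verts), s(a,b) ∈ r.edges → s(a,b) ∉ p.edges := by
    intro a b her hep
    have ha : a = x := key a (r.fst_mem_support_of_mem_edges her)
      (p.fst_mem_support_of_mem_edges hep)
    have hb : b = x := key b (r.snd_mem_support_of_mem_edges her)
      (p.snd_mem_support_of_mem_edges hep)
    exact (r.adj_of_mem_edges her).ne (ha.trans hb.symm)
  have hdisj' : List.Disjoint r.edges p.edges := by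
    intro e he1 he2
    induction e using Sym2.ind with
    | _ a b => exact hdisj a b he1 he2
  have hnodup : (r.edges ++ p.edges).Nodup :=
    List.Nodup.append hr.isTrail.edges_nodup hp.isTrail.edges_nodup hdisj'
  set m : Sym2 H.verts → Sym2 V := Sym2.map (Subtype.val) with hm
  have hminj : Function.Injective m := Sym2.map.injective Subtype.val_injective
  have hedge : ∀ f ∈ (r.edges ++ p.edges).toFinset, m f ∈ H.edgeSet := by
    intro f hf
    rw [List.mem_toFinset, List.mem_append] at hf
    induction f using Sym2.ind with
    | _ a b =>
      have : H.coe.Adj a b := by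
        rcases hf with h | h
        · exact r.adj_of_mem_edges h
        · exact p.adj_of_mem_edges h
      have : H.Adj a.val b.val := this
      simpa [hm] using this
  have hcard : r.length + p.length ≤ H.edgeSet.ncard := by
    have h1 : ((r.edges ++ p.edges).toFinset.image m).card = r.length + p.length := by
      rw [Finset.card_image_of_injective _ hminj, List.toFinset_card_of_nodup hnodup,
        List.length_append, Walk.length_edges, Walk.length_edges]
    have hsub : ↑((r.edges ++ p.edges).toFinset.image m) ⊆ H.edgeSet := by
      intro e he
      simp only [Finset.coe_image, Set.mem_image, Finset.mem_coe] at he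
      obtain ⟨f, hf, rfl⟩ := he
      exact hedge f hf
    calc r.length + p.length = ((r.edges ++ p.edges).toFinset.image m).card := h1.symm
      _ = (↑((r.edges ++ p.edges).toFinset.image m) : Set (Sym2 V)).ncard :=
          (Set.ncard_coe_finset _).symm
      _ ≤ H.edgeSet.ncard := Set.ncard_le_ncard hsub H.edgeSet.toFinite
  have d1 : G.dist u (x : V) ≤ r.length := by
    exact le_of_le_of_eq (dist_le (r.map H.hom)) (Walk.length_map ..)
  have hsplit : (p.takeUntil x hxmem).length + (p.dropUntil x hxmem).length = p.length := by
    rw [← Walk.length_append, Walk.take_spec]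
  have d2 : G.dist v (x : V) ≤ (p.takeUntil x hxmem).length := by
    exact le_of_le_of_eq (dist_le ((p.takeUntil x hxmem).map H.hom)) (Walk.length_map ..)
  have d3 : G.dist (x : V) w ≤ (p.dropUntil x hxmem).length := by
    exact le_of_le_of_eq (dist_le ((p.dropUntil x hxmem).map H.hom)) (Walk.length_map ..)
  have dvw : G.dist v w ≤ p.length := by
    exact le_of_le_of_eq (dist_le (p.map H.hom)) (Walk.length_map ..)
  have t1 : G.dist u v ≤ G.dist u (x : V) + G.dist (x : V) v := hconn.dist_triangle
  have t2 : G.dist u w ≤ G.dist u (x : V) + G.dist (x : V) w := hconn.dist_triangle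
  have hcomm : G.dist (x : V) v = G.dist v (x : V) := SimpleGraph.dist_comm
  omega

lemma two_mul_steiner_three {V : Type*} [Fintype V] {G : SimpleGraph V}
    (hG : IsModular G) (u v w : V) :
    2 * steinerDist G ({u, v, w} : Set V) = G.dist u v + G.dist u w + G.dist v w := by
  classical
  obtain ⟨z, hz1, hz2, hz3⟩ := hG.2 u v w
  obtain ⟨p1, hp1⟩ := hG.1.exists_walk_length_eq_dist z u
  obtain ⟨p2, hp2⟩ := hG.1.exists_walk_length_eq_dist z v
  obtain ⟨p3, hp3⟩ := hG.1.exists_walk_length_eq_dist z w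
  set H : G.Subgraph := p1.toSubgraph ⊔ p2.toSubgraph ⊔ p3.toSubgraph with hH
  have hz12 : ((p1.toSubgraph ⊔ p2.toSubgraph) ⊓ p3.toSubgraph).verts.Nonempty := by
    refine ⟨z, ?_⟩
    simp [Subgraph.verts_sup, Subgraph.verts_inf, Walk.mem_verts_toSubgraph,
      Walk.start_mem_support]
  have hHc : H.Connected := by
    refine Subgraph.connected_sup ?_ p3.toSubgraph_connected.preconnected hz12
    refine (Subgraph.connected_sup p1.toSubgraph_connected.preconnected
      p2.toSubgraph_connected.preconnected ?_).preconnected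
    refine ⟨z, ?_⟩
    simp [Subgraph.verts_inf, Walk.mem_verts_toSubgraph, Walk.start_mem_support]
  have hsub : ({u, v, w} : Set V) ⊆ H.verts := by
    intro y hy
    rcases hy with rfl | rfl | rfl
    · exact Or.inl (Or.inl (p1.mem_verts_toSubgraph.mpr p1.end_mem_support))
    · exact Or.inl (Or.inr (p2.mem_verts_toSubgraph.mpr p2.end_mem_support))
    · exact Or.inr (p3.mem_verts_toSubgraph.mpr p3.end_mem_support)
  have hmem : H.edgeSet.ncard ∈
      {n | ∃ H : G.Subgraph, H.Connected ∧ ({u, v, w} : Set V) ⊆ H.verts ∧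
        H.edgeSet.ncard = n} := ⟨H, hHc, hsub, rfl⟩
  have hub : H.edgeSet.ncard ≤ p1.length + p2.length + p3.length := by
    have hsubE : H.edgeSet ⊆
        ↑(p1.edges.toFinset ∪ p2.edges.toFinset ∪ p3.edges.toFinset) := by
      intro e he
      rw [hH, Subgraph.edgeSet_sup, Subgraph.edgeSet_sup] at he
      simp only [Walk.edgeSet_toSubgraph, Set.mem_union, Set.mem_setOf_eq] at he
      simp only [Finset.coe_union, Set.mem_union, Finset.mem_coe, List.mem_toFinset]
      tauto
    calc H.edgeSet.ncard
        ≤ (↑(p1.edges.toFinset ∪ p2.edges.toFinset ∪ p3.edges.toFinset) :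
            Set (Sym2 V)).ncard := Set.ncard_le_ncard hsubE (Set.toFinite _)
      _ = (p1.edges.toFinset ∪ p2.edges.toFinset ∪ p3.edges.toFinset).card :=
          Set.ncard_coe_finset _
      _ ≤ p1.edges.toFinset.card + p2.edges.toFinset.card + p3.edges.toFinset.card := by
          refine le_trans (Finset.card_union_le _ _) ?_
          have := Finset.card_union_le p1.edges.toFinset p2.edges.toFinset
          omega
      _ ≤ p1.length + p2.length + p3.length := by
          have h1 := p1.edges.toFinset_card_le
          have h2 := p2.edges.toFinset_card_le
          have h3 := p3.edges.toFinset_card_le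
          rw [Walk.length_edges] at h1 h2 h3
          omega
  have hle : steinerDist G ({u, v, w} : Set V) ≤ p1.length + p2.length + p3.length :=
    le_trans (Nat.sInf_le hmem) hub
  have hlow : G.dist u v + G.dist u w + G.dist v w
      ≤ 2 * steinerDist G ({u, v, w} : Set V) := by
    obtain ⟨H', hc', hsub', hn'⟩ := Nat.sInf_mem (Set.nonempty_of_mem hmem)
    rw [steinerDist, ← hn']
    exact sum_dist_le_two_mul_ncard hG.1 H' hc'
      (hsub' (by simp)) (hsub' (by simp)) (hsub' (by simp))
  have hzu : G.dist z u = G.dist u z := SimpleGraph.dist_comm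
  have hzv : G.dist z v = G.dist v z := SimpleGraph.dist_comm
  have hzw : G.dist z w = G.dist w z := SimpleGraph.dist_comm
  have hvz : G.dist z v = G.dist v z := SimpleGraph.dist_comm
  have hcomm1 : G.dist z v = G.dist v z := SimpleGraph.dist_comm
  -- combine
  have : 2 * (p1.length + p2.length + p3.length)
      = G.dist u v + G.dist u w + G.dist v w := by
    rw [hp1, hp2, hp3]
    have c1 : G.dist u z + G.dist z v = G.dist u v := hz1
    have c2 : G.dist u z + G.dist z w = G.dist u w := hz2
    have c3 : G.dist v z + G.dist z w = G.dist v w := hz3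
    omega
  omega

lemma fiber_card_six {V : Type*} [Fintype V] [DecidableEq V] (S : Finset V) (hS : S.card = 3) :
    ((O3 V).filter (fun t => ({t.1, t.2.1, t.2.2} : Finset V) = S)).card = 6 := by
  classical
  obtain ⟨a, b, c, hab, hac, hbc, rfl⟩ := Finset.card_eq_three.mp hS
  have hset : (O3 V).filter (fun t => ({t.1, t.2.1, t.2.2} : Finset V) = {a,b,c}) =
      ({(a,b,c),(a,c,b),(b,a,c),(b,c,a),(c,a,b),(c,b,a)} : Finset (V × V × V)) := by
    ext ⟨x, y, z⟩
    simp only [Finset.mem_filter, O3, Finset.mem_univ, true_and, Finset.mem_insert,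
      Finset.mem_singleton, Prod.mk.injEq]
    constructor
    · rintro ⟨⟨h1, h2, h3⟩, hset⟩
      have hx : x = a ∨ x = b ∨ x = c := by
        have : x ∈ ({a,b,c} : Finset V) := hset ▸ (by simp)
        simpa using this
      have hy : y = a ∨ y = b ∨ y = c := by
        have : y ∈ ({a,b,c} : Finset V) := hset ▸ (by simp)
        simpa using this
      have hz : z = a ∨ z = b ∨ z = c := by
        have hc' : c ∈ ({x,y,z} : Finset V) := hset.symm ▸ (by simp)
        have hb' : b ∈ ({x,y,z} : Finset V) := hset.symm ▸ (by simp)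
        have ha' : a ∈ ({x,y,z} : Finset V) := hset.symm ▸ (by simp)
        have : z ∈ ({a,b,c} : Finset V) := hset ▸ (by simp)
        simpa using this
      rcases hx with rfl | rfl | rfl <;> rcases hy with rfl | rfl | rfl <;>
        rcases hz with rfl | rfl | rfl <;> simp_all
    · have e1 : ({a,c,b} : Finset V) = {a,b,c} := by ext t; simp; tauto
      have e2 : ({b,a,c} : Finset V) = {a,b,c} := by ext t; simp; tauto
      have e3 : ({b,c,a} : Finset V) = {a,b,c} := by ext t; simp; tauto
      have e4 : ({c,a,b} : Finset V) = {a,b,c} := by ext t; simp; tauto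
      have e5 : ({c,b,a} : Finset V) = {a,b,c} := by ext t; simp; tauto
      rintro (⟨rfl,rfl,rfl⟩|⟨rfl,rfl,rfl⟩|⟨rfl,rfl,rfl⟩|⟨rfl,rfl,rfl⟩|⟨rfl,rfl,rfl⟩|⟨rfl,rfl,rfl⟩) <;>
        exact ⟨by simp_all [eq_comm, Ne, hab, hac, hbc], by simp_all [e1, e2, e3, e4, e5]⟩
  rw [hset]
  have hba := hab.symm; have hca := hac.symm; have hcb := hbc.symm
  rw [Finset.card_insert_of_notMem (by simp [Prod.ext_iff]; tauto),
    Finset.card_insert_of_notMem (by simp [Prod.ext_iff]; tauto),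
    Finset.card_insert_of_notMem (by simp [Prod.ext_iff]; tauto),
    Finset.card_insert_of_notMem (by simp [Prod.ext_iff]; tauto),
    Finset.card_insert_of_notMem (by simp [Prod.ext_iff]; tauto),
    Finset.card_singleton]

lemma sum_O3_triple {V : Type*} [Fintype V] [DecidableEq V] (f : Finset V → ℝ) :
    ∑ t ∈ O3 V, f {t.1, t.2.1, t.2.2}
      = ∑ S ∈ Finset.powersetCard 3 (Finset.univ : Finset V), 6 * f S := by
  classical
  have hmaps : ∀ t ∈ O3 V, ({t.1, t.2.1, t.2.2} : Finset V) ∈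
      Finset.powersetCard 3 (Finset.univ : Finset V) := by
    intro t ht
    simp only [O3, Finset.mem_filter, Finset.mem_univ, true_and] at ht
    exact Finset.mem_powersetCard.mpr ⟨Finset.subset_univ _,
      Finset.card_eq_three.mpr ⟨t.1, t.2.1, t.2.2, ht.1, ht.2.1, ht.2.2, rfl⟩⟩
  rw [← Finset.sum_fiberwise_of_maps_to hmaps (fun t : V × V × V => f {t.1, t.2.1, t.2.2})]
  refine Finset.sum_congr rfl fun S hS => ?_
  have hSc : S.card = 3 := (Finset.mem_powersetCard.mp hS).2
  calc ∑ t ∈ (O3 V).filter (fun t => ({t.1, t.2.1, t.2.2} : Finset V) = S),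
        f {t.1, t.2.1, t.2.2}
      = ∑ _t ∈ (O3 V).filter (fun t => ({t.1, t.2.1, t.2.2} : Finset V) = S), f S := by
        refine Finset.sum_congr rfl fun t ht => ?_
        rw [(Finset.mem_filter.mp ht).2]
    _ = 6 * f S := by
        rw [Finset.sum_const, fiber_card_six S hSc, nsmul_eq_mul]; norm_num

lemma sum_O3_pair {V : Type*} [Fintype V] [DecidableEq V] (g : V → V → ℝ) :
    ∑ t ∈ O3 V, g t.1 t.2.1
      = ((Fintype.card V - 2 : ℕ) : ℝ) * ∑ p ∈ Finset.univ.offDiag, g p.1 p.2 := by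
  classical
  have hmaps : ∀ t ∈ O3 V, (t.1, t.2.1) ∈ (Finset.univ.offDiag : Finset (V × V)) := by
    intro t ht
    simp only [O3, Finset.mem_filter, Finset.mem_univ, true_and] at ht
    exact Finset.mem_offDiag.mpr ⟨Finset.mem_univ _, Finset.mem_univ _, ht.1⟩
  rw [← Finset.sum_fiberwise_of_maps_to hmaps (fun t : V × V × V => g t.1 t.2.1),
    Finset.mul_sum]
  refine Finset.sum_congr rfl fun p hp => ?_
  obtain ⟨p1, p2⟩ := p
  have hp' := Finset.mem_offDiag.mp hp
  have hfib : (O3 V).filter (fun t => (t.1, t.2.1) = (p1, p2))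
      = (Finset.univ \ {p1, p2}).image (fun z => (p1, p2, z)) := by
    ext ⟨x, y, z⟩
    simp only [O3, Finset.mem_filter, Finset.mem_univ, true_and, Finset.mem_image,
      Finset.mem_sdiff, Finset.mem_insert, Finset.mem_singleton, Prod.mk.injEq]
    constructor
    · rintro ⟨⟨h1, h2, h3⟩, rfl, rfl⟩
      exact ⟨z, fun h => h.elim (fun h => h2 h.symm) (fun h => h3 h.symm), rfl, rfl, rfl⟩
    · rintro ⟨z', hz', rfl, rfl, rfl⟩
      exact ⟨⟨hp'.2.2, fun h => hz' (Or.inl h.symm), fun h => hz' (Or.inr h.symm)⟩, rfl, rfl⟩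
  have hcardfib : ((O3 V).filter (fun t => (t.1, t.2.1) = (p1, p2))).card
      = Fintype.card V - 2 := by
    rw [hfib, Finset.card_image_of_injective _ (fun a b h => (Prod.mk.inj (Prod.mk.inj h).2).2),
      Finset.card_sdiff_of_subset (Finset.subset_univ _), Finset.card_univ, Finset.card_pair hp'.2.2]
  calc ∑ t ∈ (O3 V).filter (fun t => (t.1, t.2.1) = (p1, p2)), g t.1 t.2.1
      = ∑ _t ∈ (O3 V).filter (fun t => (t.1, t.2.1) = (p1, p2)), g p1 p2 := by
        refine Finset.sum_congr rfl fun t ht => ?_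
        obtain ⟨h1, h2⟩ := Prod.mk.inj (Finset.mem_filter.mp ht).2
        rw [h1, h2]
    _ = ((Fintype.card V - 2 : ℕ) : ℝ) * g p1 p2 := by
        rw [Finset.sum_const, hcardfib, nsmul_eq_mul]

/-- For a modular graph `G` with at least three vertices,
`∑_{S ⊆ V(G), |S|=3} d(S)² = ((|V|-2)/4)·\overline{WW}(G) + (1/4)·\widehat{WW}(G)`. -/
theorem sum_sq_steiner_dist_modular
    {V : Type*} [Fintype V] [DecidableEq V] (G : SimpleGraph V)
    (hG : IsModular G) (hV : 3 ≤ Fintype.card V) :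
    ∑ S ∈ Finset.powersetCard 3 (Finset.univ : Finset V), (steinerDist G (S : Set V) : ℝ) ^ 2
      = ((Fintype.card V : ℝ) - 2) / 4 * WWbar G + 1 / 4 * WWhat G := by
  classical
  set D : V → V → ℝ := fun a b => (G.dist a b : ℝ) with hD
  have hO3mem : ∀ t : V × V × V, t ∈ O3 V → t.1 ≠ t.2.1 ∧ t.1 ≠ t.2.2 ∧ t.2.1 ≠ t.2.2 := by
    intro t ht
    simpa only [O3, Finset.mem_filter, Finset.mem_univ, true_and] using ht
  have hO3mem' : ∀ t : V × V × V, (t.1 ≠ t.2.1 ∧ t.1 ≠ t.2.2 ∧ t.2.1 ≠ t.2.2) → t ∈ O3 V := by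
    intro t ht
    simpa only [O3, Finset.mem_filter, Finset.mem_univ, true_and] using ht
  have hDcomm : ∀ a b : V, D a b = D b a := by
    intro a b; simp only [hD]; norm_cast; exact SimpleGraph.dist_comm
  -- pointwise Steiner formula
  have hpt : ∀ t ∈ O3 V,
      ((steinerDist G ((({t.1, t.2.1, t.2.2} : Finset V) : Set V))) : ℝ) ^ 2
        = (D t.1 t.2.1 + D t.1 t.2.2 + D t.2.1 t.2.2) ^ 2 / 4 := by
    intro t _
    have h2 := two_mul_steiner_three hG t.1 t.2.1 t.2.2
    have hco : (({t.1, t.2.1, t.2.2} : Finset V) : Set V) = ({t.1, t.2.1, t.2.2} : Set V) := by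
      simp
    have hcast : ((steinerDist G ({t.1, t.2.1, t.2.2} : Set V)) : ℝ)
        = (D t.1 t.2.1 + D t.1 t.2.2 + D t.2.1 t.2.2) / 2 := by
      have h3 := congrArg (fun n : ℕ => (n : ℝ)) h2
      push_cast at h3
      simp only [hD]
      linarith
    rw [hco, hcast]; ring
  -- the six sums
  set A : V × V × V → ℝ := fun t => D t.1 t.2.1 with hA
  set B : V × V × V → ℝ := fun t => D t.1 t.2.2 with hB
  set C : V × V × V → ℝ := fun t => D t.2.1 t.2.2 with hC
  set T : ℝ := ∑ t ∈ O3 V, (A t) ^ 2 with hT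
  set W : ℝ := WWhat G with hW
  have hW' : W = ∑ t ∈ O3 V, A t * B t := rfl
  -- permutation identities
  have hpB : ∑ t ∈ O3 V, (B t) ^ 2 = T := by
    rw [hT]
    refine Finset.sum_nbij' (fun t => (t.1, t.2.2, t.2.1)) (fun t => (t.1, t.2.2, t.2.1))
      ?_ ?_ (fun t _ => rfl) (fun t _ => rfl) (fun t ht => rfl)
    · intro t ht; obtain ⟨h1, h2, h3⟩ := hO3mem t ht; exact hO3mem' _ ⟨h2, h1, h3.symm⟩
    · intro t ht; obtain ⟨h1, h2, h3⟩ := hO3mem t ht; exact hO3mem' _ ⟨h2, h1, h3.symm⟩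
  have hpC : ∑ t ∈ O3 V, (C t) ^ 2 = T := by
    rw [hT]
    refine Finset.sum_nbij' (fun t => (t.2.1, t.2.2, t.1)) (fun t => (t.2.2, t.1, t.2.1))
      ?_ ?_ (fun t _ => rfl) (fun t _ => rfl) (fun t ht => rfl)
    · intro t ht; obtain ⟨h1, h2, h3⟩ := hO3mem t ht; exact hO3mem' _ ⟨h3, h1.symm, h2.symm⟩
    · intro t ht; obtain ⟨h1, h2, h3⟩ := hO3mem t ht; exact hO3mem' _ ⟨h2.symm, h3.symm, h1⟩
  have hpAC : ∑ t ∈ O3 V, A t * C t = W := by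
    rw [hW']
    refine Finset.sum_nbij' (fun t => (t.2.1, t.1, t.2.2)) (fun t => (t.2.1, t.1, t.2.2))
      ?_ ?_ (fun t _ => rfl) (fun t _ => rfl) ?_
    · intro t ht; obtain ⟨h1, h2, h3⟩ := hO3mem t ht; exact hO3mem' _ ⟨h1.symm, h3, h2⟩
    · intro t ht; obtain ⟨h1, h2, h3⟩ := hO3mem t ht; exact hO3mem' _ ⟨h1.symm, h3, h2⟩
    · intro t _
      simp only [hA, hB, hC]
      rw [hDcomm t.1 t.2.1]
  have hpBC : ∑ t ∈ O3 V, B t * C t = W := by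
    rw [hW']
    refine Finset.sum_nbij' (fun t => (t.2.2, t.1, t.2.1)) (fun t => (t.2.1, t.2.2, t.1))
      ?_ ?_ (fun t _ => rfl) (fun t _ => rfl) ?_
    · intro t ht; obtain ⟨h1, h2, h3⟩ := hO3mem t ht; exact hO3mem' _ ⟨h2.symm, h3.symm, h1⟩
    · intro t ht; obtain ⟨h1, h2, h3⟩ := hO3mem t ht; exact hO3mem' _ ⟨h3, h1.symm, h2.symm⟩
    · intro t _
      simp only [hA, hB, hC]
      rw [hDcomm t.1 t.2.2, hDcomm t.2.1 t.2.2]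
  -- T in terms of offDiag sum
  have hTP : T = ((Fintype.card V - 2 : ℕ) : ℝ)
      * ∑ p ∈ Finset.univ.offDiag, (D p.1 p.2) ^ 2 := by
    rw [hT]
    exact sum_O3_pair (fun a b => (D a b) ^ 2)
  have hcast2 : ((Fintype.card V - 2 : ℕ) : ℝ) = (Fintype.card V : ℝ) - 2 := by
    have : 2 ≤ Fintype.card V := by omega
    push_cast [Nat.cast_sub this]
    ring
  have hWWbar : WWbar G = (∑ p ∈ Finset.univ.offDiag, (D p.1 p.2) ^ 2) / 2 := rfl
  -- main chain
  have h6 := sum_O3_triple (V := V) (fun S => ((steinerDist G (S : Set V)) : ℝ) ^ 2)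
  have hmid : ∑ t ∈ O3 V, ((steinerDist G ((({t.1, t.2.1, t.2.2} : Finset V) : Set V))) : ℝ) ^ 2
      = (3 * T + 6 * W) / 4 := by
    rw [Finset.sum_congr rfl hpt]
    have hptw : ∀ t ∈ O3 V, (D t.1 t.2.1 + D t.1 t.2.2 + D t.2.1 t.2.2) ^ 2 / 4
        = ((A t) ^ 2 + (B t) ^ 2 + (C t) ^ 2
          + 2 * (A t * B t) + 2 * (A t * C t) + 2 * (B t * C t)) / 4 := by
      intro t _; simp only [hA, hB, hC]; ring
    rw [Finset.sum_congr rfl hptw, ← Finset.sum_div]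
    rw [Finset.sum_add_distrib, Finset.sum_add_distrib, Finset.sum_add_distrib,
      Finset.sum_add_distrib, Finset.sum_add_distrib,
      ← Finset.mul_sum, ← Finset.mul_sum, ← Finset.mul_sum]
    rw [hpB, hpC, hpAC, hpBC, ← hT, ← hW']
    ring
  have h6' : 6 * ∑ S ∈ Finset.powersetCard 3 (Finset.univ : Finset V),
      ((steinerDist G (S : Set V)) : ℝ) ^ 2 = (3 * T + 6 * W) / 4 := by
    rw [Finset.mul_sum]
    rw [← h6]
    exact hmid
  have hfin : ((Fintype.card V : ℝ) - 2) / 4 * WWbar G = T / 8 := by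
    rw [hWWbar, hTP, hcast2]; ring
  have hWfin : (1 : ℝ) / 4 * WWhat G = W / 4 := by rw [← hW]; ring
  linarith
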